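/- arXiv:1705.03492 — 3 statements merged into one kernel-verified Lean document; each statement's English description precedes it below -/
import Mathlib

section
/- Let A be a primitive axial algebra of Jordan type η over a field F with char F ≠ 2, generated by a closed set 𝒜 of η-axes with |𝒜| > 1 such that the graph Δ_𝒜 is connected. Let D = {τ_a | a ∈ 𝒜} and G = ⟨D⟩ ≤ Aut(A). Assume the map a ↦ τ_a on 𝒜 is injective and that D is a set of 3-transpositions in G. Then the F-linear map from the Matsuo algebra M_{η/2}(G,D) to A sending the basis element τ_a to a (for each a ∈ 𝒜) is a surjective F-algebra homomorphism; in particular A is a quotient of M_{η/2}(G,D). -/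
universe u v

section Prelim

variable (F : Type u) {A : Type v} [Field F] [NonUnitalNonAssocCommRing A]
  [Module F A] [SMulCommClass F A A] [IsScalarTower F A A]

/-- The λ-eigenspace of the adjoint map `ad_a : x ↦ a * x`. -/
def eigSp (a : A) (l : F) : Submodule F A where
  carrier := {x | a * x = l • x}
  add_mem' := by
    intro x y hx hy
    simp only [Set.mem_setOf_eq] at *
    rw [mul_add, hx, hy, smul_add]
  zero_mem' := by simp
  smul_mem' := by
    intro c x hx
    simp only [Set.mem_setOf_eq] at *
    rw [mul_smul_comm, hx, smul_smul, smul_smul, mul_comm]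

/-- `a` is a (primitive) `η`-axis. -/
structure IsAxis (η : F) (a : A) : Prop where
  ne_zero : a ≠ 0
  idem : a * a = a
  decomp : eigSp F a 1 ⊔ eigSp F a 0 ⊔ eigSp F a η = ⊤
  prim : eigSp F a 1 = Submodule.span F {a}
  f11 : ∀ x ∈ eigSp F a 1, ∀ y ∈ eigSp F a 1, x * y ∈ eigSp F a 1
  f00 : ∀ x ∈ eigSp F a 0, ∀ y ∈ eigSp F a 0, x * y ∈ eigSp F a 0
  f10 : ∀ x ∈ eigSp F a 1, ∀ y ∈ eigSp F a 0, x * y = 0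
  fpe : ∀ x ∈ eigSp F a 1 ⊔ eigSp F a 0, ∀ y ∈ eigSp F a η, x * y ∈ eigSp F a η
  fee : ∀ x ∈ eigSp F a η, ∀ y ∈ eigSp F a η, x * y ∈ eigSp F a 1 ⊔ eigSp F a 0

/-- `τ` is the Miyamoto involution of the `η`-axis `a`. -/
structure IsMiyamoto (η : F) (a : A) (τ : A → A) : Prop where
  fixes : ∀ x ∈ eigSp F a 1 ⊔ eigSp F a 0, τ x = x
  negates : ∀ x ∈ eigSp F a η, τ x = -x
  map_add : ∀ x y : A, τ (x + y) = τ x + τ y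
  map_smul : ∀ (c : F) (x : A), τ (c • x) = c • τ x
  map_mul : ∀ x y : A, τ (x * y) = τ x * τ y
  bijective : Function.Bijective τ

/-- `c = φ_a(u)`, the projection of `u` to `F·a` w.r.t. the axis `a`. -/
def IsProjCoeff (η : F) (a u : A) (c : F) : Prop :=
  ∃ u0 ∈ eigSp F a 0, ∃ ue ∈ eigSp F a η, u = c • a + u0 + ue

/-- `e` is an identity element of the subalgebra `N`. -/
def IsIdentOf (N : NonUnitalSubalgebra F A) (e : A) : Prop :=
  e ∈ N ∧ ∀ z ∈ N, e * z = z

/-- `ψ` is an `F`-algebra automorphism of `A`. -/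
structure IsAlgAut (ψ : A → A) : Prop where
  map_add : ∀ x y : A, ψ (x + y) = ψ x + ψ y
  map_smul : ∀ (c : F) (x : A), ψ (c • x) = c • ψ x
  map_mul : ∀ x y : A, ψ (x * y) = ψ x * ψ y
  bijective : Function.Bijective ψ

/-- The graph `Δ_𝒜`: distinct axes are adjacent iff their product is nonzero. -/
def axesGraph (𝒜 : Set A) : SimpleGraph 𝒜 where
  Adj x y := x ≠ y ∧ (x : A) * (y : A) ≠ 0
  symm := by
    constructor
    rintro x y ⟨hxy, hm⟩
    exact ⟨hxy.symm, by rwa [mul_comm]⟩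
  loopless := by constructor; rintro x ⟨h, -⟩; exact h rfl

/-- Multiplication of the Jordan algebra of Clifford type `J(V,B) = F·e ⊕ V`. -/
def cliffMul {V : Type*} [AddCommGroup V] [Module F V]
    (B : V →ₗ[F] V →ₗ[F] F) (x y : F × V) : F × V :=
  (x.1 * y.1 + B x.2 y.2, x.1 • y.2 + y.1 • x.2)

end Prelim

/-- An isomorphism of `A` with a Jordan algebra of Clifford type `J(V,B)`. -/
structure CliffordTypeIso (F : Type u) (A : Type v) [Field F]
    [NonUnitalNonAssocCommRing A] [Module F A] [SMulCommClass F A A]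
    [IsScalarTower F A A] where
  V : Type v
  [instAdd : AddCommGroup V]
  [instMod : Module F V]
  B : V →ₗ[F] V →ₗ[F] F
  symm : ∀ v w : V, B v w = B w v
  iso : A ≃ₗ[F] F × V
  mul_compat : ∀ x y : A, iso (x * y) = cliffMul F B (iso x) (iso y)

section AuxProof

variable {F : Type u} {A : Type v} [Field F] [NonUnitalNonAssocCommRing A]
  [Module F A] [SMulCommClass F A A] [IsScalarTower F A A]

lemma aux_mem_eigSp {a : A} {l : F} {x : A} : x ∈ eigSp F a l ↔ a * x = l • x := Iff.rfl

/-- Distinct nonzero idempotents are "independent": `α • a = β • b → α = β = 0`. -/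
lemma aux_idem_indep {a b : A} (ha : a * a = a) (hb : b * b = b) (ha0 : a ≠ 0)
    (hb0 : b ≠ 0) (hab : a ≠ b) {α β : F} (h : α • a = β • b) : α = 0 ∧ β = 0 := by
  by_cases hβ : β = 0
  · subst hβ
    rw [zero_smul, smul_eq_zero] at h
    exact ⟨h.resolve_right ha0, rfl⟩
  · exfalso
    have hb' : b = (β⁻¹ * α) • a := by
      rw [mul_smul, h, inv_smul_smul₀ hβ]
    set γ := β⁻¹ * α with hγ
    have hγγ : (γ * γ) • a = γ • a := by
      have : b * b = (γ * γ) • a := by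
        rw [hb'] ; rw [smul_mul_assoc, mul_smul_comm, ha, smul_smul]
      rw [← this, hb, hb']
    have : (γ * γ - γ) • a = 0 := by rw [sub_smul, hγγ, sub_self]
    rcases smul_eq_zero.1 this with h1 | h1
    · have h1 : γ * (γ - 1) = 0 := by ring_nf; ring_nf at h1; linear_combination h1
      rcases mul_eq_zero.1 h1 with h2 | h2
      · apply hb0; rw [hb', h2, zero_smul]
      · have h2 : γ = 1 := by linear_combination h2
        apply hab; rw [hb', h2, one_smul]
    · exact ha0 h1

/-- Fundamental multiplication formula: `a * u = φ • a + (η/2) • (u - τ u)`. -/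
lemma aux_axis_mul (hchar : (2 : F) ≠ 0) {η : F} {a : A} (ha : IsAxis F η a)
    {τ : A → A} (hτ : IsMiyamoto F η a τ) (u : A) :
    ∃ φ : F, a * u = φ • a + (η / 2) • (u - τ u) := by
  have hu : u ∈ eigSp F a 1 ⊔ eigSp F a 0 ⊔ eigSp F a η := ha.decomp ▸ Submodule.mem_top
  obtain ⟨x, hx, ue, hue, rfl⟩ := Submodule.mem_sup.1 hu
  obtain ⟨x1, hx1, x0, hx0, rfl⟩ := Submodule.mem_sup.1 hx
  obtain ⟨φ, rfl⟩ := Submodule.mem_span_singleton.1 (ha.prim ▸ hx1)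
  refine ⟨φ, ?_⟩
  have h1 : a * (φ • a) = φ • a := by rw [mul_smul_comm, ha.idem]
  have h0 : a * x0 = 0 := by
    have := aux_mem_eigSp.1 hx0; rwa [zero_smul] at this
  have he : a * ue = η • ue := aux_mem_eigSp.1 hue
  have hfix : τ (φ • a + x0) = φ • a + x0 :=
    hτ.fixes _ (Submodule.add_mem _ (Submodule.mem_sup_left hx1) (Submodule.mem_sup_right hx0))
  have hτu : τ (φ • a + x0 + ue) = (φ • a + x0) - ue := by
    rw [hτ.map_add, hfix, hτ.negates _ hue, sub_eq_add_neg]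
  rw [mul_add, mul_add, h1, h0, add_zero, he, hτu,
    show (φ • a + x0 + ue) - ((φ • a + x0) - ue) = (2 : F) • ue by rw [two_smul]; abel,
    smul_smul, div_mul_cancel₀ η hchar]

/-- Uniqueness of the Miyamoto involution. -/
lemma aux_miy_unique {η : F} {a : A}
    (ha : eigSp F a 1 ⊔ eigSp F a 0 ⊔ eigSp F a η = ⊤)
    {τ τ' : A → A} (h : IsMiyamoto F η a τ) (h' : IsMiyamoto F η a τ') : τ = τ' := by
  funext u
  have hu : u ∈ eigSp F a 1 ⊔ eigSp F a 0 ⊔ eigSp F a η := ha ▸ Submodule.mem_top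
  obtain ⟨x, hx, y, hy, rfl⟩ := Submodule.mem_sup.1 hu
  rw [h.map_add, h'.map_add, h.fixes x hx, h'.fixes x hx, h.negates y hy, h'.negates y hy]

/-- Conjugation of a Miyamoto involution by an algebra automorphism. -/
lemma aux_miy_conj {η : F} (ψ : Equiv.Perm A)
    (hadd : ∀ x y : A, ψ (x + y) = ψ x + ψ y)
    (hsmul : ∀ (c : F) (x : A), ψ (c • x) = c • ψ x)
    (hmul : ∀ x y : A, ψ (x * y) = ψ x * ψ y)
    {b : A} {τ : A → A} (hτ : IsMiyamoto F η b τ) :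
    IsMiyamoto F η (ψ b) (⇑ψ ∘ τ ∘ ⇑ψ.symm) := by
  have hsadd : ∀ x y : A, ψ.symm (x + y) = ψ.symm x + ψ.symm y := by
    intro x y
    apply ψ.injective
    rw [hadd, Equiv.apply_symm_apply, Equiv.apply_symm_apply, Equiv.apply_symm_apply]
  have hssmul : ∀ (c : F) (x : A), ψ.symm (c • x) = c • ψ.symm x := by
    intro c x
    apply ψ.injective
    rw [hsmul, Equiv.apply_symm_apply, Equiv.apply_symm_apply]
  have hneg : ∀ x : A, ψ (-x) = -ψ x := by
    intro x
    rw [← neg_one_smul F x, hsmul, neg_one_smul]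
  have hmem : ∀ (l : F) (x : A), x ∈ eigSp F (ψ b) l ↔ ψ.symm x ∈ eigSp F b l := by
    intro l x
    constructor
    · intro hx
      have : ψ (b * ψ.symm x) = ψ (l • ψ.symm x) := by
        rw [hmul, Equiv.apply_symm_apply, hsmul, Equiv.apply_symm_apply]
        exact hx
      exact ψ.injective this
    · intro hx
      show ψ b * x = l • x
      conv_lhs => rw [← Equiv.apply_symm_apply ψ x]
      rw [← hmul, aux_mem_eigSp.1 hx, hsmul, Equiv.apply_symm_apply]
  have hsup : ∀ x ∈ eigSp F (ψ b) 1 ⊔ eigSp F (ψ b) 0,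
      ψ.symm x ∈ eigSp F b 1 ⊔ eigSp F b 0 := by
    intro x hx
    obtain ⟨y, hy, z, hz, rfl⟩ := Submodule.mem_sup.1 hx
    rw [hsadd]
    exact Submodule.add_mem _ (Submodule.mem_sup_left ((hmem 1 y).1 hy))
      (Submodule.mem_sup_right ((hmem 0 z).1 hz))
  refine ⟨?_, ?_, ?_, ?_, ?_, ?_⟩
  · intro x hx
    show ψ (τ (ψ.symm x)) = x
    rw [hτ.fixes _ (hsup x hx), Equiv.apply_symm_apply]
  · intro x hx
    show ψ (τ (ψ.symm x)) = -x
    rw [hτ.negates _ ((hmem η x).1 hx), hneg, Equiv.apply_symm_apply]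
  · intro x y
    show ψ (τ (ψ.symm (x + y))) = _
    rw [hsadd, hτ.map_add, hadd]; rfl
  · intro c x
    show ψ (τ (ψ.symm (c • x))) = _
    rw [hssmul, hτ.map_smul, hsmul]; rfl
  · intro x y
    show ψ (τ (ψ.symm (x * y))) = _
    have hsmulmul : ψ.symm (x * y) = ψ.symm x * ψ.symm y := by
      apply ψ.injective
      rw [hmul, Equiv.apply_symm_apply, Equiv.apply_symm_apply, Equiv.apply_symm_apply]
    rw [hsmulmul, hτ.map_mul, hmul]; rfl
  · exact ψ.bijective.comp (hτ.bijective.comp ψ.symm.bijective)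

end AuxProof

/-- Let `A` be generated by a closed set `𝒜` of `η`-axes
(`|𝒜| > 1`, `Δ_𝒜` connected), let `D = {τ_a | a ∈ 𝒜}` and `G = ⟨D⟩`.  If
`a ↦ τ_a` is injective on `𝒜` and `D` is a set of 3-transpositions in `G`,
then the linear map from the Matsuo algebra `M_{η/2}(G, D)` to `A` sending the
basis element `τ_a` to `a` is a surjective algebra homomorphism; in particular
`A` is a quotient of `M_{η/2}(G, D)`.  (Via the bijection `a ↦ τ_a`, the Matsuo
algebra is realized on the free module `𝒜 →₀ F`, with the Matsuo product of
basis vectors given case-by-case: `x·x = x`; `x·y = 0` if `|τ_x τ_y| = 2`; and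
`x·y = (η/2)(x + y − x^{τ_y})` if `|τ_x τ_y| = 3`.) -/
theorem quotient_of_matsuo_algebra
    {F : Type u} {A : Type v} [Field F] [NonUnitalNonAssocCommRing A]
    [Module F A] [SMulCommClass F A A] [IsScalarTower F A A] [DecidableEq A]
    (hchar : (2 : F) ≠ 0) (η : F) (hη0 : η ≠ 0) (hη1 : η ≠ 1)
    (𝒜 : Set A) (h𝒜 : ∀ a ∈ 𝒜, IsAxis F η a)
    (hgen : NonUnitalAlgebra.adjoin F 𝒜 = ⊤)
    (hcard : 𝒜.Nontrivial)
    (hconn : (axesGraph 𝒜).Connected)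
    (τp : A → Equiv.Perm A) (hτ : ∀ a ∈ 𝒜, IsMiyamoto F η a ⇑(τp a))
    (hclosed : ∀ a ∈ 𝒜, ∀ b ∈ 𝒜, τp b a ∈ 𝒜)
    (hinj : Set.InjOn τp 𝒜)
    (hinvol : ∀ d ∈ τp '' 𝒜, orderOf d = 2)
    (hnormal : ∀ g ∈ Subgroup.closure (τp '' 𝒜), ∀ d ∈ τp '' 𝒜,
      g * d * g⁻¹ ∈ τp '' 𝒜)
    (h3trans : ∀ s ∈ τp '' 𝒜, ∀ t ∈ τp '' 𝒜, orderOf (s * t) ∈ ({1, 2, 3} : Set ℕ))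
    (conj : 𝒜 → 𝒜 → 𝒜) (hconj : ∀ a b : 𝒜, (conj a b : A) = τp (b : A) (a : A)) :
    Function.Surjective (Finsupp.linearCombination F (fun a : 𝒜 => (a : A))) ∧
    ∀ a b : 𝒜,
      Finsupp.linearCombination F (fun a : 𝒜 => (a : A))
        (if a = b then Finsupp.single a (1 : F)
         else if orderOf (τp (a : A) * τp (b : A)) = 2 then 0
         else (η / 2) • (Finsupp.single a (1 : F) + Finsupp.single b (1 : F)
                - Finsupp.single (conj a b) (1 : F)))
      = (a : A) * (b : A) := by
  have haxis : ∀ a : 𝒜, IsAxis F η (a : A) := fun a => h𝒜 a a.2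
  have hmiy : ∀ a : 𝒜, IsMiyamoto F η (a : A) ⇑(τp (a : A)) := fun a => hτ a a.2
  have key : ∀ a b : 𝒜, ∃ φ : F,
      (a : A) * (b : A) = φ • (a : A) + (η / 2) • ((b : A) - τp (a : A) (b : A)) :=
    fun a b => aux_axis_mul hchar (haxis a) (hmiy a) (b : A)
  have hconjperm : ∀ a b : 𝒜,
      τp (τp (a : A) (b : A)) = τp (a : A) * τp (b : A) * (τp (a : A))⁻¹ := by
    intro a b
    have hc : τp (a : A) (b : A) ∈ 𝒜 := hclosed b b.2 a a.2
    have h1 : IsMiyamoto F η (τp (a : A) (b : A)) ⇑(τp (τp (a : A) (b : A))) := hτ _ hc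
    have h2 : IsMiyamoto F η (τp (a : A) (b : A))
        (⇑(τp (a : A)) ∘ ⇑(τp (b : A)) ∘ ⇑(τp (a : A)).symm) :=
      aux_miy_conj (τp (a : A)) (hmiy a).map_add (hmiy a).map_smul (hmiy a).map_mul (hmiy b)
    have heq := aux_miy_unique (h𝒜 _ hc).decomp h1 h2
    ext x
    exact congrFun heq x
  have hsq : ∀ a : 𝒜, τp (a : A) * τp (a : A) = 1 := by
    intro a
    have h2 : orderOf (τp (a : A)) = 2 := hinvol _ ⟨a, a.2, rfl⟩
    have := pow_orderOf_eq_one (τp (a : A))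
    rwa [h2, pow_two] at this
  have hinv : ∀ a : 𝒜, (τp (a : A))⁻¹ = τp (a : A) :=
    fun a => inv_eq_of_mul_eq_one_right (hsq a)
  -- surjectivity
  have hgenmul : ∀ a ∈ 𝒜, ∀ b ∈ 𝒜, a * b ∈ Submodule.span F 𝒜 := by
    intro a ha b hb
    obtain ⟨φ, hφ⟩ := key ⟨a, ha⟩ ⟨b, hb⟩
    rw [hφ]
    exact Submodule.add_mem _ (Submodule.smul_mem _ _ (Submodule.subset_span ha))
      (Submodule.smul_mem _ _ (Submodule.sub_mem _ (Submodule.subset_span hb)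
        (Submodule.subset_span (hclosed b hb a ha))))
  have hgenspan : ∀ a ∈ 𝒜, ∀ y ∈ Submodule.span F 𝒜, a * y ∈ Submodule.span F 𝒜 := by
    intro a ha y hy
    induction hy using Submodule.span_induction with
    | mem z hz => exact hgenmul a ha z hz
    | zero => rw [mul_zero]; exact Submodule.zero_mem _
    | add u v _ _ hu hv => rw [mul_add]; exact Submodule.add_mem _ hu hv
    | smul c u _ hu => rw [mul_smul_comm]; exact Submodule.smul_mem _ _ hu
  have hmulmem : ∀ x ∈ Submodule.span F 𝒜, ∀ y ∈ Submodule.span F 𝒜,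
      x * y ∈ Submodule.span F 𝒜 := by
    intro x hx
    induction hx using Submodule.span_induction with
    | mem z hz => exact hgenspan z hz
    | zero => intro y hy; rw [zero_mul]; exact Submodule.zero_mem _
    | add u v _ _ hu hv => intro y hy; rw [add_mul]; exact Submodule.add_mem _ (hu y hy) (hv y hy)
    | smul c u _ hu => intro y hy; rw [smul_mul_assoc]; exact Submodule.smul_mem _ _ (hu y hy)
  have hspan : Submodule.span F 𝒜 = ⊤ := by
    have hle : NonUnitalAlgebra.adjoin F 𝒜 ≤
        (Submodule.span F 𝒜).toNonUnitalSubalgebra (fun x y hx hy => hmulmem x hx y hy) :=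
      NonUnitalAlgebra.adjoin_le Submodule.subset_span
    rw [hgen] at hle
    rw [eq_top_iff]
    intro x _
    exact hle (show x ∈ (⊤ : NonUnitalSubalgebra F A) from trivial)
  constructor
  · rw [← LinearMap.range_eq_top, Finsupp.range_linearCombination, Subtype.range_coe, hspan]
  · intro a b
    by_cases hab : a = b
    · subst hab
      rw [if_pos rfl, Finsupp.linearCombination_single, one_smul, (haxis a).idem]
    · rw [if_neg hab]
      have habA : (a : A) ≠ (b : A) := fun h => hab (Subtype.ext h)
      have hst : τp (a : A) ≠ τp (b : A) := fun h => hab (Subtype.ext (hinj a.2 b.2 h))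
      by_cases h2 : orderOf (τp (a : A) * τp (b : A)) = 2
      · rw [if_pos h2, map_zero]
        have hcomm : τp (a : A) * τp (b : A) = τp (b : A) * τp (a : A) := by
          have h4 := pow_orderOf_eq_one (τp (a : A) * τp (b : A))
          rw [h2, pow_two] at h4
          have h5 := inv_eq_of_mul_eq_one_right h4
          rw [mul_inv_rev, hinv a, hinv b] at h5
          exact h5.symm
        have hfix : τp (b : A) (a : A) = (a : A) := by
          apply hinj (hclosed a a.2 b b.2) a.2
          rw [hconjperm b a, hinv b, ← hcomm, mul_assoc, hsq b, mul_one]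
        have hfix' : τp (a : A) (b : A) = (b : A) := by
          apply hinj (hclosed b b.2 a a.2) b.2
          rw [hconjperm a b, hinv a, hcomm, mul_assoc, hsq a, mul_one]
        obtain ⟨φ, hφ⟩ := key a b
        obtain ⟨ψ', hψ⟩ := key b a
        rw [hfix', sub_self, smul_zero, add_zero] at hφ
        rw [hfix, sub_self, smul_zero, add_zero] at hψ
        have heq : φ • (a : A) = ψ' • (b : A) := by rw [← hφ, ← hψ, mul_comm]
        have h0 := (aux_idem_indep (haxis a).idem (haxis b).idem (haxis a).ne_zero
          (haxis b).ne_zero habA heq).1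
        rw [hφ, h0, zero_smul]
      · rw [if_neg h2]
        have h3 : orderOf (τp (a : A) * τp (b : A)) = 3 := by
          have hmem := h3trans (τp (a : A)) ⟨a, a.2, rfl⟩ (τp (b : A)) ⟨b, b.2, rfl⟩
          simp only [Set.mem_insert_iff, Set.mem_singleton_iff] at hmem
          rcases hmem with h | h | h
          · exfalso
            have h1 : τp (a : A) * τp (b : A) = 1 := orderOf_eq_one_iff.1 h
            have := eq_inv_of_mul_eq_one_left h1
            rw [hinv b] at this
            exact hst this
          · exact absurd h h2
          · exact h
        have hbraid : τp (a : A) * τp (b : A) * τp (a : A)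
            = τp (b : A) * τp (a : A) * τp (b : A) := by
          have h1 : (τp (a : A) * τp (b : A)) ^ 3 = 1 := by
            rw [← h3]; exact pow_orderOf_eq_one _
          have h4 : (τp (a : A) * τp (b : A) * τp (a : A))
              * (τp (b : A) * τp (a : A) * τp (b : A))
              = (τp (a : A) * τp (b : A)) ^ 3 := by
            simp only [pow_succ, pow_zero, one_mul, mul_assoc]
          have h5 := inv_eq_of_mul_eq_one_right (h4.trans h1)
          rw [mul_inv_rev, mul_inv_rev, hinv a, hinv b] at h5
          rw [mul_assoc]
          exact h5
        have heqc : τp (a : A) (b : A) = τp (b : A) (a : A) := by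
          apply hinj (hclosed b b.2 a a.2) (hclosed a a.2 b b.2)
          rw [hconjperm a b, hconjperm b a, hinv a, hinv b]
          exact hbraid
        obtain ⟨φ, hφ⟩ := key a b
        obtain ⟨ψ', hψ⟩ := key b a
        rw [← heqc] at hψ
        have heq6 : φ • (a : A) + (η / 2) • ((b : A) - τp (a : A) (b : A))
            = ψ' • (b : A) + (η / 2) • ((a : A) - τp (a : A) (b : A)) := by
          rw [← hφ, ← hψ, mul_comm]
        have heq7 : (φ - η / 2) • (a : A) = (ψ' - η / 2) • (b : A) := by
          linear_combination (norm := module) heq6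
        have h0 := (aux_idem_indep (haxis a).idem (haxis b).idem (haxis a).ne_zero
          (haxis b).ne_zero habA heq7).1
        have hφval : φ = η / 2 := by
          have := sub_eq_zero.1 h0; exact this
        rw [map_smul, map_sub, map_add, Finsupp.linearCombination_single,
          Finsupp.linearCombination_single, Finsupp.linearCombination_single,
          one_smul, one_smul, one_smul, hconj a b, ← heqc, hφ, hφval]
        rw [smul_sub, smul_add, smul_sub]
        abel
end

section
/- Let A be a primitive axial algebra of Jordan type η over a field F with char F ≠ 2. For any two η-axes a, b ∈ A, one has φ_a(b) = φ_b(a). -/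
universe u v

section Aux

variable {F : Type u} {A : Type v} [Field F] [NonUnitalNonAssocCommRing A]
  [Module F A] [SMulCommClass F A A] [IsScalarTower F A A]

lemma mem_eigSp' {a x : A} {l : F} : x ∈ eigSp F a l ↔ a * x = l • x := Iff.rfl

/-- Independence of the 1-, 0-, η-eigenspace components. -/
lemma zero_coeff' {a : A} (hne : a ≠ 0) (hidem : a * a = a) {η : F}
    (hη0 : η ≠ 0) (hη1 : η ≠ 1)
    {α : F} {x0 xη : A} (h0 : x0 ∈ eigSp F a (0:F)) (he : xη ∈ eigSp F a η)
    (h : α • a + x0 + xη = 0) : α = 0 := by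
  rw [mem_eigSp'] at h0 he
  have h1 : α • a + η • xη = 0 := by
    have := congrArg (a * ·) h
    simpa [mul_add, mul_smul_comm, hidem, h0, he] using this
  have h2 : α • a + (η*η) • xη = 0 := by
    have := congrArg (a * ·) h1
    simpa [mul_add, mul_smul_comm, hidem, he, smul_smul] using this
  have h3 : (η*η - η) • xη = 0 := by
    have := sub_eq_zero.mpr (h2.trans h1.symm)
    rw [← this]; module
  have hxη : xη = 0 := by
    have hne' : η*η - η ≠ 0 := by
      intro hcon
      rcases mul_eq_zero.mp (by linear_combination hcon : η*(η-1) = 0) with h|h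
      · exact hη0 h
      · exact hη1 (by linear_combination h)
    exact (smul_eq_zero.mp h3).resolve_left hne'
  have : α • a = 0 := by rw [hxη] at h1; simpa using h1
  exact (smul_eq_zero.mp this).resolve_right hne

/-- The key identity `c² = cd`. -/
lemma key_identity {η : F} (hη0 : η ≠ 0) (hη1 : η ≠ 1)
    {a b : A} (ha : IsAxis F η a) (hb : IsAxis F η b)
    {c d : F} (hc : IsProjCoeff F η a b c) (hd : IsProjCoeff F η b a d) :
    c * c = c * d := by
  obtain ⟨b0, hb0, bη, hbη, hbd⟩ := hc
  obtain ⟨a0, ha0, aη, haη, had⟩ := hd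
  have haE1 : a ∈ eigSp F a 1 := by rw [mem_eigSp', one_smul]; exact ha.idem
  have hab0 : a * b0 = 0 := ha.f10 a haE1 b0 hb0
  have habη : a * bη = η • bη := hbη
  have hbaη : b * aη = η • aη := haη
  -- a * b computed with respect to a:
  have e1 : a * b = c • a + η • bη := by
    rw [hbd, mul_add, mul_add, mul_smul_comm, ha.idem, hab0, habη, add_zero]
  -- a * b computed with respect to b:
  have hbE1 : b ∈ eigSp F b 1 := by rw [mem_eigSp', one_smul]; exact hb.idem
  have hba0 : b * a0 = 0 := hb.f10 b hbE1 a0 ha0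
  have e2 : a * b = d • b + η • aη := by
    rw [mul_comm, had, mul_add, mul_add, mul_smul_comm, hb.idem, hba0, hbaη,
      add_zero]
  -- decompose bη * bη
  obtain ⟨y, hy, z, hz, hyz⟩ := Submodule.mem_sup.mp (ha.fee bη hbη bη hbη)
  rw [ha.prim] at hy
  obtain ⟨μ, rfl⟩ := Submodule.mem_span_singleton.mp hy
  have hbηbη : bη * bη = μ • a + z := hyz.symm
  have hb0bη : b0 * bη ∈ eigSp F a η :=
    ha.fpe b0 (Submodule.mem_sup_right hb0) bη hbη
  have hb0a : b0 * a = 0 := by rw [mul_comm]; exact hab0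
  have hbηa : bη * a = η • bη := by rw [mul_comm]; exact habη
  have hbηb0 : bη * b0 = b0 * bη := mul_comm _ _
  -- b * b = b expanded with respect to a gives μ = c - c²
  have expand : (c*c) • a + (2*c*η) • bη + b0*b0 + (2:F) • (b0*bη) + (μ • a + z)
      = c • a + b0 + bη := by
    have h : b * b = b := hb.idem
    nth_rewrite 1 [hbd] at h
    nth_rewrite 1 [hbd] at h
    rw [hbd] at h
    simp only [mul_add, add_mul, mul_smul_comm, smul_mul_assoc, ha.idem,
      hab0, habη, hb0a, hbηa, hbηb0, hbηbη, smul_zero, smul_smul] at h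
    rw [← h]; module
  have hμ : μ = c - c * c := by
    have eq1 : (c*c + μ - c) • a + (b0*b0 + z - b0)
        + ((2*c*η - 1) • bη + (2:F) • (b0*bη)) = 0 := by
      linear_combination (norm := module) expand
    have hm0 : b0*b0 + z - b0 ∈ eigSp F a (0:F) :=
      sub_mem (add_mem (ha.f00 b0 hb0 b0 hb0) hz) hb0
    have hmη : (2*c*η - 1) • bη + (2:F) • (b0*bη) ∈ eigSp F a η :=
      add_mem (Submodule.smul_mem _ _ hbη) (Submodule.smul_mem _ _ hb0bη)
    have := zero_coeff' ha.ne_zero ha.idem hη0 hη1 hm0 hmη eq1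
    linear_combination this
  -- compute b * (a * b) in two ways
  have key1 : b * (a * b) = (c*c + η*μ) • a + η • z
      + ((c*η + c*η*η) • bη + η • (b0*bη)) := by
    rw [e1, mul_add, mul_smul_comm, mul_smul_comm, mul_comm b a, e1]
    have hbbη : b * bη = (c*η) • bη + b0*bη + (μ • a + z) := by
      rw [hbd, add_mul, add_mul, smul_mul_assoc, habη, hbηbη, smul_smul]
    rw [hbbη]; module
  have key2 : b * (a * b) = (d*c + η*c - η*d*c) • a + ((d - η*d) • b0)
      + ((d + η*η - η*d) • bη) := by
    have haηval : η • aη = a * b - d • b := by rw [e2]; abel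
    have step : b * (a * b) = d • b + η • (η • aη) := by
      rw [e2, mul_add, mul_smul_comm, mul_smul_comm, hb.idem, hbaη]
    rw [step, haηval, e1, hbd]; module
  -- compare the A₁-components
  have eqfin : (c*c + η*μ - (d*c + η*c - η*d*c)) • a
      + (η • z - (d - η*d) • b0)
      + (((c*η + c*η*η) - (d + η*η - η*d)) • bη + η • (b0*bη)) = 0 := by
    have h := key1.symm.trans key2
    rw [← sub_eq_zero] at h
    rw [← h]; module
  have hm0 : η • z - (d - η*d) • b0 ∈ eigSp F a (0:F) :=
    sub_mem (Submodule.smul_mem _ _ hz) (Submodule.smul_mem _ _ hb0)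
  have hmη : ((c*η + c*η*η) - (d + η*η - η*d)) • bη + η • (b0*bη) ∈ eigSp F a η :=
    add_mem (Submodule.smul_mem _ _ hbη) (Submodule.smul_mem _ _ hb0bη)
  have hz0 := zero_coeff' ha.ne_zero ha.idem hη0 hη1 hm0 hmη eqfin
  rw [hμ] at hz0
  -- hz0 : c*c + η*(c - c*c) - (d*c + η*c - η*d*c) = 0
  have h1η : (1:F) - η ≠ 0 := fun h => hη1 (by linear_combination -h)
  have : (1 - η) * (c*c - c*d) = 0 := by linear_combination hz0
  have := (mul_eq_zero.mp this).resolve_left h1η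
  linear_combination this

end Aux

/-- In a primitive axial algebra of Jordan type `η`, one has
`φ_a(b) = φ_b(a)` for any two `η`-axes `a, b`. -/
theorem proj_coeff_symmetric
    {F : Type u} {A : Type v} [Field F] [NonUnitalNonAssocCommRing A]
    [Module F A] [SMulCommClass F A A] [IsScalarTower F A A]
    (hchar : (2 : F) ≠ 0) (η : F) (hη0 : η ≠ 0) (hη1 : η ≠ 1)
    (𝒜 : Set A) (h𝒜 : ∀ a ∈ 𝒜, IsAxis F η a)
    (hgen : NonUnitalAlgebra.adjoin F 𝒜 = ⊤)
    (a b : A) (ha : IsAxis F η a) (hb : IsAxis F η b)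
    (c d : F) (hc : IsProjCoeff F η a b c) (hd : IsProjCoeff F η b a d) :
    c = d := by
  have h1 : c * c = c * d := key_identity hη0 hη1 ha hb hc hd
  have h2 : d * d = d * c := key_identity hη0 hη1 hb ha hd hc
  by_contra hcd
  have hc0 : c = 0 := by
    rcases mul_eq_zero.mp (show c * (c - d) = 0 by linear_combination h1) with h|h
    · exact h
    · exact absurd (by linear_combination h) hcd
  have hd0 : d = 0 := by
    rcases mul_eq_zero.mp (show d * (d - c) = 0 by linear_combination h2) with h|h
    · exact h
    · exact absurd (by linear_combination -h) hcd
  exact hcd (hc0.trans hd0.symm)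
end

section
/- Let A be a primitive axial algebra of Jordan type η over a field F with char F ≠ 2. Then there exists a nonzero symmetric bilinear form (·,·) on A that associates with the algebra product, i.e., (ab, c) = (a, bc) for all a, b, c ∈ A, and which satisfies (a, a) = 1 for every η-axis a ∈ A. -/
universe u v

set_option linter.unusedSectionVars false

namespace Frob

variable {F : Type u} {A : Type v} [Field F] [NonUnitalNonAssocCommRing A]
  [Module F A] [SMulCommClass F A A] [IsScalarTower F A A]

lemma mem_eigSp {a x : A} {l : F} : x ∈ eigSp F a l ↔ a * x = l • x := Iff.rfl

/-- decomposition predicate -/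
def DecProp (η : F) (a x : A) (p : F × A × A) : Prop :=
  x = p.1 • a + p.2.1 + p.2.2 ∧ p.2.1 ∈ eigSp F a 0 ∧ p.2.2 ∈ eigSp F a η

open Classical in
noncomputable def dec (η : F) (a x : A) : F × A × A :=
  if h : ∃ p, DecProp η a x p then h.choose else (0, 0, 0)

noncomputable def phi (η : F) (a x : A) : F := (dec η a x).1
noncomputable def p0 (η : F) (a x : A) : A := (dec η a x).2.1
noncomputable def pe (η : F) (a x : A) : A := (dec η a x).2.2

variable {η : F} {a : A}

lemma a_mem1 (ha : IsAxis F η a) : a ∈ eigSp F a 1 := by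
  rw [mem_eigSp, one_smul]; exact ha.idem

lemma exists_dec (ha : IsAxis F η a) (x : A) : ∃ p, DecProp η a x p := by
  have hx : x ∈ eigSp F a 1 ⊔ eigSp F a 0 ⊔ eigSp F a η := by
    rw [ha.decomp]; trivial
  rcases Submodule.mem_sup.mp hx with ⟨y, hy, w, hw, rfl⟩
  rcases Submodule.mem_sup.mp hy with ⟨u, hu, v, hv, rfl⟩
  rw [ha.prim] at hu
  rcases Submodule.mem_span_singleton.mp hu with ⟨c, rfl⟩
  exact ⟨(c, v, w), rfl, hv, hw⟩

lemma indep3 (hη0 : η ≠ 0) (hη1 : η ≠ 1) {u v w : A}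
    (hu : u ∈ eigSp F a 1) (hv : v ∈ eigSp F a 0) (hw : w ∈ eigSp F a η)
    (h : u + v + w = 0) : u = 0 ∧ v = 0 ∧ w = 0 := by
  rw [mem_eigSp, one_smul] at hu
  rw [mem_eigSp, zero_smul] at hv
  rw [mem_eigSp] at hw
  have h1 : u + η • w = 0 := by
    have := congrArg (a * ·) h
    simpa [mul_add, hu, hv, hw] using this
  have h2 : u + (η * η) • w = 0 := by
    have := congrArg (a * ·) h1
    simpa [mul_add, hu, hw, mul_smul_comm, smul_smul] using this
  have hw0 : w = 0 := by
    have h3 : (η - η * η) • w = 0 := by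
      have := sub_eq_zero.mpr (h1.trans h2.symm)
      simpa [sub_smul] using this
    have hne : η - η * η ≠ 0 := by
      intro hc
      apply hη1
      have : η * (1 - η) = 0 := by ring_nf; linear_combination hc
      rcases mul_eq_zero.mp this with h | h
      · exact absurd h hη0
      · exact absurd (sub_eq_zero.mp h).symm hη1
    exact (smul_eq_zero.mp h3).resolve_left hne
  have hu0 : u = 0 := by
    have huv : u + v = 0 := by simpa [hw0] using h
    have := congrArg (a * ·) huv
    simpa [mul_add, hu, hv] using this
  refine ⟨hu0, ?_, hw0⟩
  simpa [hu0, hw0] using h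

lemma dec_unique (ha : IsAxis F η a) (hη0 : η ≠ 0) (hη1 : η ≠ 1) {x : A}
    {p q : F × A × A} (hp : DecProp η a x p) (hq : DecProp η a x q) : p = q := by
  obtain ⟨hpe, hp0, hpη⟩ := hp
  obtain ⟨hqe, hq0, hqη⟩ := hq
  have hPQ : p.1 • a + p.2.1 + p.2.2 = q.1 • a + q.2.1 + q.2.2 := hpe.symm.trans hqe
  have hsum : (p.1 - q.1) • a + (p.2.1 - q.2.1) + (p.2.2 - q.2.2) = 0 := by
    calc (p.1 - q.1) • a + (p.2.1 - q.2.1) + (p.2.2 - q.2.2)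
        = (p.1 • a + p.2.1 + p.2.2) - (q.1 • a + q.2.1 + q.2.2) := by
          rw [sub_smul]; abel
      _ = 0 := sub_eq_zero.mpr hPQ
  obtain ⟨h1, h2, h3⟩ := indep3 hη0 hη1
    (Submodule.smul_mem _ _ (a_mem1 ha)) (Submodule.sub_mem _ hp0 hq0)
    (Submodule.sub_mem _ hpη hqη) hsum
  have e1 : p.1 = q.1 := by
    rcases smul_eq_zero.mp h1 with h | h
    · exact sub_eq_zero.mp h
    · exact absurd h ha.ne_zero
  have e2 : p.2.1 = q.2.1 := sub_eq_zero.mp h2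
  have e3 : p.2.2 = q.2.2 := sub_eq_zero.mp h3
  exact Prod.ext e1 (Prod.ext e2 e3)

lemma dec_spec (ha : IsAxis F η a) (x : A) : DecProp η a x (dec η a x) := by
  have h := exists_dec ha x
  simp only [dec, dif_pos h]
  exact h.choose_spec

lemma dec_eq (ha : IsAxis F η a) (hη0 : η ≠ 0) (hη1 : η ≠ 1) {x : A}
    {p : F × A × A} (hp : DecProp η a x p) : dec η a x = p :=
  dec_unique ha hη0 hη1 (dec_spec ha x) hp

lemma dec_def (ha : IsAxis F η a) (x : A) :
    x = phi η a x • a + p0 η a x + pe η a x := (dec_spec ha x).1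

lemma p0_mem (ha : IsAxis F η a) (x : A) : p0 η a x ∈ eigSp F a 0 := (dec_spec ha x).2.1

lemma pe_mem (ha : IsAxis F η a) (x : A) : pe η a x ∈ eigSp F a η := (dec_spec ha x).2.2

section unique
variable (ha : IsAxis F η a) (hη0 : η ≠ 0) (hη1 : η ≠ 1)
include ha hη0 hη1

lemma phi_eq {x : A} {c : F} {u v : A} (hx : x = c • a + u + v)
    (hu : u ∈ eigSp F a 0) (hv : v ∈ eigSp F a η) : phi η a x = c := by
  have := dec_eq ha hη0 hη1 (p := (c, u, v)) ⟨hx, hu, hv⟩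
  rw [phi, this]

lemma pe_eq {x : A} {c : F} {u v : A} (hx : x = c • a + u + v)
    (hu : u ∈ eigSp F a 0) (hv : v ∈ eigSp F a η) : pe η a x = v := by
  have := dec_eq ha hη0 hη1 (p := (c, u, v)) ⟨hx, hu, hv⟩
  rw [pe, this]

lemma p0_eq {x : A} {c : F} {u v : A} (hx : x = c • a + u + v)
    (hu : u ∈ eigSp F a 0) (hv : v ∈ eigSp F a η) : p0 η a x = u := by
  have := dec_eq ha hη0 hη1 (p := (c, u, v)) ⟨hx, hu, hv⟩
  rw [p0, this]

lemma phi_self : phi η a a = 1 :=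
  phi_eq ha hη0 hη1 (by rw [one_smul, add_zero, add_zero]) (Submodule.zero_mem _)
    (Submodule.zero_mem _)

lemma phi_mem0 {x : A} (hx : x ∈ eigSp F a 0) : phi η a x = 0 :=
  phi_eq ha hη0 hη1 (by rw [zero_smul, zero_add, add_zero]) hx (Submodule.zero_mem _)

lemma pe_mem0 {x : A} (hx : x ∈ eigSp F a 0) : pe η a x = 0 :=
  pe_eq ha hη0 hη1 (by rw [zero_smul, zero_add, add_zero]) hx (Submodule.zero_mem _)

lemma phi_memE {x : A} (hx : x ∈ eigSp F a η) : phi η a x = 0 :=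
  phi_eq ha hη0 hη1 (by rw [zero_smul, zero_add, zero_add]) (Submodule.zero_mem _) hx

lemma pe_memE {x : A} (hx : x ∈ eigSp F a η) : pe η a x = x :=
  pe_eq ha hη0 hη1 (by rw [zero_smul, zero_add, zero_add]) (Submodule.zero_mem _) hx

lemma phi_smul_a (c : F) : phi η a (c • a) = c :=
  phi_eq ha hη0 hη1 (by rw [add_zero, add_zero]) (Submodule.zero_mem _) (Submodule.zero_mem _)

lemma pe_smul_a (c : F) : pe η a (c • a) = 0 :=
  pe_eq ha hη0 hη1 (by rw [add_zero, add_zero]) (Submodule.zero_mem _) (Submodule.zero_mem _)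

lemma phi_mem_sup {x : A} (hx : x ∈ eigSp F a 1 ⊔ eigSp F a 0) : pe η a x = 0 := by
  rcases Submodule.mem_sup.mp hx with ⟨u, hu, v, hv, rfl⟩
  rw [ha.prim] at hu
  rcases Submodule.mem_span_singleton.mp hu with ⟨c, rfl⟩
  exact pe_eq ha hη0 hη1 (by rw [add_zero]) hv (Submodule.zero_mem _)

lemma phi_add (x y : A) : phi η a (x + y) = phi η a x + phi η a y := by
  refine phi_eq ha hη0 hη1 ?_ (Submodule.add_mem _ (p0_mem ha x) (p0_mem ha y))
    (Submodule.add_mem _ (pe_mem ha x) (pe_mem ha y))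
  rw [add_smul]
  nth_rewrite 1 [dec_def ha x, dec_def ha y]
  abel

lemma pe_add (x y : A) : pe η a (x + y) = pe η a x + pe η a y := by
  refine pe_eq ha hη0 hη1 (c := phi η a x + phi η a y) ?_ (Submodule.add_mem _ (p0_mem ha x) (p0_mem ha y))
    (Submodule.add_mem _ (pe_mem ha x) (pe_mem ha y))
  rw [add_smul]
  nth_rewrite 1 [dec_def ha x, dec_def ha y]
  abel

lemma phi_smul (c : F) (x : A) : phi η a (c • x) = c * phi η a x := by
  refine phi_eq ha hη0 hη1 ?_ (Submodule.smul_mem _ c (p0_mem ha x))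
    (Submodule.smul_mem _ c (pe_mem ha x))
  rw [mul_smul]
  nth_rewrite 1 [dec_def ha x]
  rw [smul_add, smul_add]

lemma pe_smul (c : F) (x : A) : pe η a (c • x) = c • pe η a x := by
  refine pe_eq ha hη0 hη1 (c := c * phi η a x) ?_ (Submodule.smul_mem _ c (p0_mem ha x))
    (Submodule.smul_mem _ c (pe_mem ha x))
  rw [mul_smul]
  nth_rewrite 1 [dec_def ha x]
  rw [smul_add, smul_add]

lemma phi_sub (x y : A) : phi η a (x - y) = phi η a x - phi η a y := by
  have := phi_add ha hη0 hη1 (x - y) y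
  rw [sub_add_cancel] at this
  linear_combination -this

lemma pe_sub (x y : A) : pe η a (x - y) = pe η a x - pe η a y := by
  have := pe_add ha hη0 hη1 (x - y) y
  rw [sub_add_cancel] at this
  rw [eq_sub_iff_add_eq, ← this]

lemma mul_dec (x : A) : a * x = phi η a x • a + η • pe η a x := by
  nth_rewrite 1 [dec_def ha x]
  rw [mul_add, mul_add, mul_smul_comm, ha.idem,
    ha.f10 a (a_mem1 ha) _ (p0_mem ha x), (mem_eigSp.mp (pe_mem ha x) : _), add_zero]

end unique

/-! ### The Miyamoto involution -/

noncomputable def tau (η : F) (a : A) (x : A) : A := x - (2:F) • pe η a x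

section tau
variable (ha : IsAxis F η a) (hη0 : η ≠ 0) (hη1 : η ≠ 1)
include ha hη0 hη1

lemma tau_add (x y : A) : tau η a (x + y) = tau η a x + tau η a y := by
  rw [tau, tau, tau, pe_add ha hη0 hη1, smul_add]; abel

lemma tau_smul (c : F) (x : A) : tau η a (c • x) = c • tau η a x := by
  rw [tau, tau, pe_smul ha hη0 hη1, smul_sub, smul_smul, smul_smul, mul_comm]

lemma tau_eq (x : A) : tau η a x = (phi η a x • a + p0 η a x) - pe η a x := by
  rw [tau]
  nth_rewrite 1 [dec_def ha x]
  rw [two_smul]; abel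

omit hη0 hη1 in
lemma xp_mem (x : A) : phi η a x • a + p0 η a x ∈ eigSp F a 1 ⊔ eigSp F a 0 :=
  Submodule.add_mem _ (Submodule.mem_sup_left (Submodule.smul_mem _ _ (a_mem1 ha)))
    (Submodule.mem_sup_right (p0_mem ha x))

omit hη0 hη1 in
lemma sup10_mul {x y : A} (hx : x ∈ eigSp F a 1 ⊔ eigSp F a 0)
    (hy : y ∈ eigSp F a 1 ⊔ eigSp F a 0) : x * y ∈ eigSp F a 1 ⊔ eigSp F a 0 := by
  rcases Submodule.mem_sup.mp hx with ⟨u, hu, v, hv, rfl⟩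
  rcases Submodule.mem_sup.mp hy with ⟨u', hu', v', hv', rfl⟩
  have h2 : u * v' = 0 := ha.f10 u hu v' hv'
  have h3 : v * u' = 0 := by rw [mul_comm]; exact ha.f10 u' hu' v hv
  have hexp : (u + v) * (u' + v') = u * u' + v * v' := by
    rw [add_mul, mul_add, mul_add, h2, h3]; abel
  rw [hexp]
  exact Submodule.add_mem _ (Submodule.mem_sup_left (ha.f11 u hu u' hu'))
    (Submodule.mem_sup_right (ha.f00 v hv v' hv'))

lemma mul_expand (x y : A) :
    x * y = ((phi η a x • a + p0 η a x) * (phi η a y • a + p0 η a y)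
        + pe η a x * pe η a y)
      + ((phi η a x • a + p0 η a x) * pe η a y
        + pe η a x * (phi η a y • a + p0 η a y)) := by
  nth_rewrite 1 [dec_def ha x, dec_def ha y]
  simp only [add_mul, mul_add]
  abel

lemma pe_mul (x y : A) :
    pe η a (x * y) = (phi η a x • a + p0 η a x) * pe η a y
      + pe η a x * (phi η a y • a + p0 η a y) := by
  have hm1 : (phi η a x • a + p0 η a x) * (phi η a y • a + p0 η a y)
      ∈ eigSp F a 1 ⊔ eigSp F a 0 := sup10_mul ha (xp_mem ha x) (xp_mem ha y)
  have hm2 : pe η a x * pe η a y ∈ eigSp F a 1 ⊔ eigSp F a 0 :=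
    ha.fee _ (pe_mem ha x) _ (pe_mem ha y)
  have hm3 : (phi η a x • a + p0 η a x) * pe η a y ∈ eigSp F a η :=
    ha.fpe _ (xp_mem ha x) _ (pe_mem ha y)
  have hm4 : pe η a x * (phi η a y • a + p0 η a y) ∈ eigSp F a η := by
    rw [mul_comm]; exact ha.fpe _ (xp_mem ha y) _ (pe_mem ha x)
  rw [mul_expand ha hη0 hη1 x y, pe_add ha hη0 hη1, pe_add ha hη0 hη1, pe_add ha hη0 hη1,
    phi_mem_sup ha hη0 hη1 hm1, phi_mem_sup ha hη0 hη1 hm2,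
    pe_memE ha hη0 hη1 hm3, pe_memE ha hη0 hη1 hm4, zero_add, zero_add]

lemma tau_mul (x y : A) : tau η a (x * y) = tau η a x * tau η a y := by
  rw [tau, pe_mul ha hη0 hη1, tau_eq ha hη0 hη1, tau_eq ha hη0 hη1]
  nth_rewrite 1 [mul_expand ha hη0 hη1 x y]
  rw [sub_mul, mul_sub, mul_sub, two_smul]
  abel

lemma pe_tau (x : A) : pe η a (tau η a x) = - pe η a x := by
  refine pe_eq ha hη0 hη1 (c := phi η a x) ?_ (p0_mem ha x)
    (Submodule.neg_mem _ (pe_mem ha x))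
  rw [tau_eq ha hη0 hη1]
  abel

lemma tau_invol (x : A) : tau η a (tau η a x) = x := by
  rw [tau, pe_tau ha hη0 hη1, tau, smul_neg]
  abel

lemma tau_bij : Function.Bijective (tau η a) :=
  Function.Involutive.bijective (tau_invol ha hη0 hη1)

end tau

/-! ### Transport of axes along algebra automorphisms -/

section transport
variable {ψ : A → A} (hadd : ∀ x y, ψ (x + y) = ψ x + ψ y)
  (hsmul : ∀ (c : F) (x : A), ψ (c • x) = c • ψ x)
  (hmul : ∀ x y, ψ (x * y) = ψ x * ψ y) (hbij : Function.Bijective ψ)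

noncomputable def lequiv : A ≃ₗ[F] A :=
  LinearEquiv.ofBijective { toFun := ψ, map_add' := hadd, map_smul' := hsmul } hbij

include hadd hsmul hmul hbij

lemma eig_map (b : A) (l : F) :
    eigSp F (ψ b) l = Submodule.map (lequiv hadd hsmul hbij).toLinearMap (eigSp F b l) := by
  ext x
  rw [Submodule.mem_map]
  constructor
  · intro hx
    obtain ⟨y, rfl⟩ := hbij.surjective x
    refine ⟨y, ?_, rfl⟩
    rw [mem_eigSp] at hx ⊢
    apply hbij.injective
    rw [hmul, hsmul]
    exact hx
  · rintro ⟨y, hy, rfl⟩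
    rw [mem_eigSp] at hy
    show ψ b * ψ y = l • ψ y
    rw [← hmul, hy, hsmul]

lemma psi_zero : ψ 0 = 0 := by
  have := hsmul 0 0
  simpa using this

lemma isAxis_map {b : A} (hb : IsAxis F η b) : IsAxis F η (ψ b) := by
  refine ⟨?_, ?_, ?_, ?_, ?_, ?_, ?_, ?_, ?_⟩
  · intro h
    exact hb.ne_zero (hbij.injective (h.trans (psi_zero hadd hsmul hmul hbij).symm))
  · rw [← hmul, hb.idem]
  · rw [eig_map hadd hsmul hmul hbij, eig_map hadd hsmul hmul hbij,
      eig_map hadd hsmul hmul hbij, ← Submodule.map_sup, ← Submodule.map_sup, hb.decomp,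
      Submodule.map_top]
    exact LinearMap.range_eq_top.mpr hbij.surjective
  · rw [eig_map hadd hsmul hmul hbij, hb.prim, Submodule.map_span, Set.image_singleton]
    rfl
  · intro x hx y hy
    rw [eig_map hadd hsmul hmul hbij] at hx hy ⊢
    obtain ⟨u, hu, rfl⟩ := hx
    obtain ⟨v, hv, rfl⟩ := hy
    exact ⟨u * v, hb.f11 u hu v hv, hmul u v⟩
  · intro x hx y hy
    rw [eig_map hadd hsmul hmul hbij] at hx hy ⊢
    obtain ⟨u, hu, rfl⟩ := hx
    obtain ⟨v, hv, rfl⟩ := hy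
    exact ⟨u * v, hb.f00 u hu v hv, hmul u v⟩
  · intro x hx y hy
    rw [eig_map hadd hsmul hmul hbij] at hx hy
    obtain ⟨u, hu, rfl⟩ := hx
    obtain ⟨v, hv, rfl⟩ := hy
    show ψ u * ψ v = 0
    rw [← hmul, hb.f10 u hu v hv]
    exact psi_zero hadd hsmul hmul hbij
  · intro x hx y hy
    rw [eig_map hadd hsmul hmul hbij, eig_map hadd hsmul hmul hbij,
      ← Submodule.map_sup] at hx
    rw [eig_map hadd hsmul hmul hbij] at hy ⊢
    obtain ⟨u, hu, rfl⟩ := hx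
    obtain ⟨v, hv, rfl⟩ := hy
    exact ⟨u * v, hb.fpe u hu v hv, hmul u v⟩
  · intro x hx y hy
    rw [eig_map hadd hsmul hmul hbij] at hx hy
    rw [eig_map hadd hsmul hmul hbij, eig_map hadd hsmul hmul hbij, ← Submodule.map_sup]
    obtain ⟨u, hu, rfl⟩ := hx
    obtain ⟨v, hv, rfl⟩ := hy
    exact ⟨u * v, hb.fee u hu v hv, hmul u v⟩

variable (hη0 : η ≠ 0) (hη1 : η ≠ 1)
include hη0 hη1

lemma phi_map {b : A} (hb : IsAxis F η b) (x : A) :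
    phi η (ψ b) (ψ x) = phi η b x := by
  have hb' := isAxis_map hadd hsmul hmul hbij (η := η) hb
  have hdec : ψ x = phi η b x • ψ b + ψ (p0 η b x) + ψ (pe η b x) := by
    rw [← hsmul, ← hadd, ← hadd, ← dec_def hb x]
  refine phi_eq hb' hη0 hη1 hdec ?_ ?_
  · rw [eig_map hadd hsmul hmul hbij]
    exact ⟨_, p0_mem hb x, rfl⟩
  · rw [eig_map hadd hsmul hmul hbij]
    exact ⟨_, pe_mem hb x, rfl⟩

end transport

/-! ### Symmetry of the projection form on axes -/

section symm
variable (hη0 : η ≠ 0) (hη1 : η ≠ 1)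
include hη0 hη1

lemma key_sq (ha : IsAxis F η a) {b : A} (hb : IsAxis F η b) :
    phi η a b * phi η a b = phi η b a * phi η a b := by
  obtain ⟨β, b0, be, hbdec, hb0, hbe, hβ, hbee⟩ :
      ∃ β b0 be, b = β • a + b0 + be ∧ b0 ∈ eigSp F a 0 ∧ be ∈ eigSp F a η ∧
        phi η a b = β ∧ pe η a b = be :=
    ⟨_, _, _, dec_def ha b, p0_mem ha b, pe_mem ha b, rfl, rfl⟩
  obtain ⟨α, a0, ae, hadec, ha0, hae, hα, haee⟩ :
      ∃ α a0 ae, a = α • b + a0 + ae ∧ a0 ∈ eigSp F b 0 ∧ ae ∈ eigSp F b η ∧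
        phi η b a = α ∧ pe η b a = ae :=
    ⟨_, _, _, dec_def hb a, p0_mem hb a, pe_mem hb a, rfl, rfl⟩
  rw [hβ, hα]
  have habe : a * be = η • be := hbe
  have hab0 : a * b0 = 0 := ha.f10 a (a_mem1 ha) b0 hb0
  have hbae : b * ae = η • ae := hae
  have hab : a * b = β • a + η • be := by rw [mul_dec ha hη0 hη1, hβ, hbee]
  have hba : b * a = α • b + η • ae := by rw [mul_dec hb hη0 hη1, hα, haee]
  have hφbe : phi η a be = 0 := phi_memE ha hη0 hη1 hbe
  have hφb0 : phi η a b0 = 0 := phi_mem0 ha hη0 hη1 hb0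
  have hb0be : b0 * be ∈ eigSp F a η := ha.fpe b0 (Submodule.mem_sup_right hb0) be hbe
  have hφb0be : phi η a (b0 * be) = 0 := phi_memE ha hη0 hη1 hb0be
  have h1 : phi η a (a * b) = β := by
    rw [hab]
    simp only [phi_add ha hη0 hη1, phi_smul ha hη0 hη1]
    rw [phi_self ha hη0 hη1, hφbe]
    ring
  have h1' : phi η a (b * a) = β := by rw [mul_comm]; exact h1
  have h2 : α * β + η * phi η a ae = β := by
    have hh := h1'
    rw [hba] at hh
    simp only [phi_add ha hη0 hη1, phi_smul ha hη0 hη1] at hh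
    rw [hβ] at hh
    exact hh
  have hbbe : b * be = (β * η) • be + (b0 * be + be * be) := by
    rw [hbdec, add_mul, add_mul, smul_mul_assoc, habe, smul_smul, add_assoc]
  have hφbbe : phi η a (b * be) = phi η a (be * be) := by
    rw [hbbe]
    simp only [phi_add ha hη0 hη1, phi_smul ha hη0 hη1]
    rw [hφbe, hφb0be]
    ring
  have hbb0 : b * b0 = b0 * b0 + be * b0 := by
    rw [hbdec, add_mul, add_mul, smul_mul_assoc, hab0, smul_zero, zero_add]
  have hφbb0 : phi η a (b * b0) = 0 := by
    rw [hbb0]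
    simp only [phi_add ha hη0 hη1]
    rw [phi_mem0 ha hη0 hη1 (ha.f00 b0 hb0 b0 hb0), mul_comm be b0, hφb0be]
    ring
  have h4 : phi η a (be * be) = β - β * β := by
    have hbb : b * b = β • (b * a) + b * b0 + b * be := by
      nth_rewrite 2 [hbdec]
      rw [mul_add, mul_add, mul_smul_comm]
    have hthis := congrArg (phi η a) hb.idem
    rw [hbb] at hthis
    simp only [phi_add ha hη0 hη1, phi_smul ha hη0 hη1] at hthis
    rw [h1', hφbb0, hφbbe, hβ] at hthis
    linear_combination hthis
  have hw1 : phi η a ((a * b) * b) = β * β + η * (β - β * β) := by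
    have hexp : (a * b) * b = β • (a * b) + η • (b * be) := by
      nth_rewrite 1 [hab]
      rw [add_mul, smul_mul_assoc, smul_mul_assoc, mul_comm be b]
    rw [hexp]
    simp only [phi_add ha hη0 hη1, phi_smul ha hη0 hη1]
    rw [h1, hφbbe, h4]
  have hw2 : phi η a ((a * b) * b) = α * β + η * η * phi η a ae := by
    have hexp : (a * b) * b = α • b + (η * η) • ae := by
      rw [mul_comm a b, hba, add_mul, smul_mul_assoc, smul_mul_assoc, hb.idem,
        mul_comm ae b, hbae, smul_smul]
    rw [hexp]
    simp only [phi_add ha hη0 hη1, phi_smul ha hη0 hη1]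
    rw [hβ]
  have hkey : (β * β - α * β) * (1 - η) = 0 := by
    have h12 := hw1.symm.trans hw2
    linear_combination h12 + η * h2
  rcases mul_eq_zero.mp hkey with h | h
  · linear_combination h
  · exact absurd (by linear_combination -h) hη1

lemma phi_symm (ha : IsAxis F η a) {b : A} (hb : IsAxis F η b) :
    phi η a b = phi η b a := by
  have h1 := key_sq hη0 hη1 ha hb
  have h2 := key_sq hη0 hη1 hb ha
  by_cases hz : phi η a b = 0
  · rw [hz] at h2 ⊢
    have h3 : phi η b a * phi η b a = 0 := by rw [h2]; ring
    exact (mul_self_eq_zero.mp h3).symm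
  · exact mul_right_cancel₀ hz h1

end symm

/-! ### Three-axis identities and spanning -/

section three
variable (hη0 : η ≠ 0) (hη1 : η ≠ 1)
include hη0 hη1

lemma tau_axis (ha : IsAxis F η a) {b : A} (hb : IsAxis F η b) :
    IsAxis F η (tau η a b) :=
  isAxis_map (tau_add ha hη0 hη1) (tau_smul ha hη0 hη1) (tau_mul ha hη0 hη1)
    (tau_bij ha hη0 hη1) hb

lemma phi_tau (ha : IsAxis F η a) {b : A} (hb : IsAxis F η b) (x : A) :
    phi η (tau η a b) (tau η a x) = phi η b x :=
  phi_map (tau_add ha hη0 hη1) (tau_smul ha hη0 hη1) (tau_mul ha hη0 hη1)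
    (tau_bij ha hη0 hη1) hη0 hη1 hb x

lemma phi_tau_symm (ha : IsAxis F η a) {b c : A} (hb : IsAxis F η b)
    (hc : IsAxis F η c) : phi η c (tau η a b) = phi η b (tau η a c) := by
  have htb := tau_axis hη0 hη1 ha hb
  calc phi η c (tau η a b) = phi η (tau η a b) c := phi_symm hη0 hη1 hc htb
    _ = phi η (tau η a b) (tau η a (tau η a c)) := by rw [tau_invol ha hη0 hη1]
    _ = phi η b (tau η a c) := phi_tau hη0 hη1 ha hb _

variable (hchar : (2:F) ≠ 0)
include hchar

lemma pe_via_tau (ha : IsAxis F η a) (x : A) :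
    pe η a x = (2:F)⁻¹ • (x - tau η a x) := by
  rw [tau, sub_sub_cancel, smul_smul, inv_mul_cancel₀ hchar, one_smul]

lemma phi_mul_symm (ha : IsAxis F η a) {b c : A} (hb : IsAxis F η b)
    (hc : IsAxis F η c) : phi η c (a * b) = phi η b (a * c) := by
  rw [mul_dec ha hη0 hη1 b, mul_dec ha hη0 hη1 c, pe_via_tau hη0 hη1 hchar ha b,
    pe_via_tau hη0 hη1 hchar ha c]
  simp only [phi_add hc hη0 hη1, phi_smul hc hη0 hη1, phi_sub hc hη0 hη1,
    phi_add hb hη0 hη1, phi_smul hb hη0 hη1, phi_sub hb hη0 hη1]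
  rw [phi_symm hη0 hη1 hc ha, phi_symm hη0 hη1 hc hb, phi_tau_symm hη0 hη1 ha hb hc,
    phi_symm hη0 hη1 hb ha]
  ring

lemma axis_mul_mem (ha : IsAxis F η a) {b : A} (hb : IsAxis F η b) :
    a * b ∈ Submodule.span F {x : A | IsAxis F η x} := by
  rw [mul_dec ha hη0 hη1 b, pe_via_tau hη0 hη1 hchar ha b]
  refine Submodule.add_mem _ (Submodule.smul_mem _ _ (Submodule.subset_span ha))
    (Submodule.smul_mem _ _ (Submodule.smul_mem _ _ (Submodule.sub_mem _
      (Submodule.subset_span hb) (Submodule.subset_span (tau_axis hη0 hη1 ha hb)))))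

lemma span_axes_eq_top {𝒜 : Set A} (h𝒜 : ∀ a ∈ 𝒜, IsAxis F η a)
    (hgen : NonUnitalAlgebra.adjoin F 𝒜 = ⊤) :
    Submodule.span F {x : A | IsAxis F η x} = ⊤ := by
  set S := Submodule.span F {x : A | IsAxis F η x} with hS
  have hmul : ∀ x ∈ S, ∀ y ∈ S, x * y ∈ S := by
    intro x hx y hy
    induction hy using Submodule.span_induction with
    | mem c hc =>
      induction hx using Submodule.span_induction with
      | mem d hd => exact axis_mul_mem hη0 hη1 hchar hd hc
      | zero => rw [zero_mul]; exact S.zero_mem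
      | add u v hu hv ihu ihv => rw [add_mul]; exact S.add_mem ihu ihv
      | smul r u hu ihu => rw [smul_mul_assoc]; exact S.smul_mem r ihu
    | zero => rw [mul_zero]; exact S.zero_mem
    | add u v hu hv ihu ihv => rw [mul_add]; exact S.add_mem ihu ihv
    | smul r u hu ihu => rw [mul_smul_comm]; exact S.smul_mem r ihu
  rw [eq_top_iff]
  intro x _
  have hx : x ∈ NonUnitalAlgebra.adjoin F 𝒜 := by rw [hgen]; trivial
  exact NonUnitalAlgebra.adjoin_le
    (S := S.toNonUnitalSubalgebra fun u v hu hv => hmul u hu v hv)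
    (fun y hy => Submodule.subset_span (h𝒜 y hy)) hx

end three

/-! ### Construction of the Frobenius form -/

noncomputable def phiL (hη0 : η ≠ 0) (hη1 : η ≠ 1) {d : A} (hd : IsAxis F η d) :
    A →ₗ[F] F where
  toFun := phi η d
  map_add' := phi_add hd hη0 hη1
  map_smul' := phi_smul hd hη0 hη1

@[simp] lemma phiL_apply (hη0 : η ≠ 0) (hη1 : η ≠ 1) {d : A} (hd : IsAxis F η d)
    (x : A) : phiL hη0 hη1 hd x = phi η d x := rfl

lemma frob3 (hη0 : η ≠ 0) (hη1 : η ≠ 1) (hchar : (2:F) ≠ 0)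
    {a b c : A} (ha : IsAxis F η a) (hb : IsAxis F η b) (hc : IsAxis F η c) :
    phi η c (a * b) = phi η a (b * c) := by
  calc phi η c (a * b) = phi η b (a * c) := phi_mul_symm hη0 hη1 hchar ha hb hc
    _ = phi η b (c * a) := by rw [mul_comm]
    _ = phi η a (c * b) := phi_mul_symm hη0 hη1 hchar hc ha hb
    _ = phi η a (b * c) := by rw [mul_comm]

lemma exists_frob (hchar : (2 : F) ≠ 0) (hη0 : η ≠ 0) (hη1 : η ≠ 1)
    (𝒜 : Set A) (hne : 𝒜.Nonempty) (h𝒜 : ∀ a ∈ 𝒜, IsAxis F η a)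
    (hgen : NonUnitalAlgebra.adjoin F 𝒜 = ⊤) :
    ∃ Φ : A →ₗ[F] A →ₗ[F] F,
      Φ ≠ 0 ∧
      (∀ x y : A, Φ x y = Φ y x) ∧
      (∀ x y z : A, Φ (x * y) z = Φ x (y * z)) ∧
      (∀ a : A, IsAxis F η a → Φ a a = 1) := by
  classical
  have hspan : Submodule.span F {x : A | IsAxis F η x} = ⊤ :=
    span_axes_eq_top hη0 hη1 hchar h𝒜 hgen
  obtain ⟨B, hBM, hBsp, hBli⟩ := exists_linearIndependent F {x : A | IsAxis F η x}
  rw [hspan] at hBsp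
  have hBsp' : ⊤ ≤ Submodule.span F (Set.range ((↑) : B → A)) := by
    rw [Subtype.range_coe, hBsp]
  let bas : Module.Basis B F A := Module.Basis.mk hBli hBsp'
  let T : A →ₗ[F] (A →ₗ[F] F) := bas.constr F (fun i => phiL hη0 hη1 (hBM i.2))
  have hTd : ∀ (d : A), IsAxis F η d → ∀ (x : A), T x d = phi η d x := by
    intro d hd x
    have hmaps : T.flip d = phiL hη0 hη1 hd := by
      refine bas.ext fun i => ?_
      have hb : bas i = (↑i : A) := Module.Basis.mk_apply hBli hBsp' i
      have h2 : T (bas i) = phiL hη0 hη1 (hBM i.2) := bas.constr_basis F _ i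
      rw [hb] at h2
      rw [hb, LinearMap.flip_apply, h2, phiL_apply, phiL_apply]
      exact phi_symm hη0 hη1 (hBM i.2) hd
    exact LinearMap.congr_fun hmaps x
  have hTc : ∀ (c : A), IsAxis F η c → ∀ (x : A), T c x = phi η c x := by
    intro c hc x
    have hmaps : T c = phiL hη0 hη1 hc := by
      refine LinearMap.ext_on hspan fun d hd => ?_
      rw [hTd d hd c, phiL_apply]
      exact (phi_symm hη0 hη1 hc hd).symm
    exact LinearMap.congr_fun hmaps x
  have hsymm : ∀ x y : A, T y x = T x y := by
    have hmapeq : T = T.flip := by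
      refine LinearMap.ext_on hspan fun b hb => ?_
      refine LinearMap.ext_on hspan fun c hc => ?_
      rw [LinearMap.flip_apply, hTc b hb c, hTc c hc b]
      exact phi_symm hη0 hη1 hb hc
    intro x y
    calc T y x = T.flip y x := LinearMap.congr_fun (LinearMap.congr_fun hmapeq y) x
      _ = T x y := rfl
  refine ⟨T.flip, ?_, ?_, ?_, ?_⟩
  · obtain ⟨a, haA⟩ := hne
    have ha := h𝒜 a haA
    intro h0
    have h1 : T.flip a a = 1 := by
      rw [LinearMap.flip_apply, hTc a ha a]
      exact phi_self ha hη0 hη1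
    rw [h0] at h1
    simp at h1
  · intro x y
    rw [LinearMap.flip_apply, LinearMap.flip_apply]
    exact hsymm x y
  · intro x y z
    rw [LinearMap.flip_apply, LinearMap.flip_apply]
    -- goal : T z (x * y) = T (y * z) x
    have hz : z ∈ Submodule.span F {x : A | IsAxis F η x} := by rw [hspan]; trivial
    have hx : x ∈ Submodule.span F {x : A | IsAxis F η x} := by rw [hspan]; trivial
    have hy : y ∈ Submodule.span F {x : A | IsAxis F η x} := by rw [hspan]; trivial
    clear hgen
    induction hz using Submodule.span_induction with
    | mem c hcM =>
      induction hx using Submodule.span_induction with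
      | mem d hdM =>
        induction hy using Submodule.span_induction with
        | mem e heM =>
          rw [hTc c hcM (d * e), hTd d hdM (e * c)]
          exact frob3 hη0 hη1 hchar hdM heM hcM
        | zero => simp only [mul_zero, zero_mul, map_zero, LinearMap.zero_apply]
        | add u v hu hv ihu ihv =>
          simp only [mul_add, add_mul, map_add, LinearMap.add_apply, ihu, ihv]
        | smul r u hu ihu =>
          simp only [mul_smul_comm, smul_mul_assoc, map_smul, LinearMap.smul_apply, ihu]
      | zero => simp only [mul_zero, zero_mul, map_zero, LinearMap.zero_apply]
      | add u v hu hv ihu ihv =>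
        simp only [mul_add, add_mul, map_add, LinearMap.add_apply, ihu, ihv]
      | smul r u hu ihu =>
        simp only [mul_smul_comm, smul_mul_assoc, map_smul, LinearMap.smul_apply, ihu]
    | zero => simp only [mul_zero, zero_mul, map_zero, LinearMap.zero_apply]
    | add u v hu hv ihu ihv =>
      simp only [mul_add, add_mul, map_add, LinearMap.add_apply, ihu, ihv]
    | smul r u hu ihu =>
      simp only [mul_smul_comm, smul_mul_assoc, map_smul, LinearMap.smul_apply, ihu]
  · intro a ha
    rw [LinearMap.flip_apply, hTc a ha a]
    exact phi_self ha hη0 hη1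

end Frob

/-- Every primitive axial algebra of Jordan type `η` admits a
Frobenius form: a nonzero symmetric bilinear form `(·,·)` with
`(ab, c) = (a, bc)` for all `a, b, c`, and `(a, a) = 1` for every `η`-axis. -/
theorem exists_frobenius_form
    {F : Type u} {A : Type v} [Field F] [NonUnitalNonAssocCommRing A]
    [Module F A] [SMulCommClass F A A] [IsScalarTower F A A]
    (hchar : (2 : F) ≠ 0) (η : F) (hη0 : η ≠ 0) (hη1 : η ≠ 1)
    (𝒜 : Set A) (hne : 𝒜.Nonempty) (h𝒜 : ∀ a ∈ 𝒜, IsAxis F η a)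
    (hgen : NonUnitalAlgebra.adjoin F 𝒜 = ⊤) :
    ∃ Φ : A →ₗ[F] A →ₗ[F] F,
      Φ ≠ 0 ∧
      (∀ x y : A, Φ x y = Φ y x) ∧
      (∀ x y z : A, Φ (x * y) z = Φ x (y * z)) ∧
      (∀ a : A, IsAxis F η a → Φ a a = 1) :=
  Frob.exists_frob hchar hη0 hη1 𝒜 hne h𝒜 hgen
end
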